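/- Let E be a finite subset of V. Define R_0 = E ∪ −S(L) and R_{i+1} = { v ∈ V : π(Ψ(v)) ∩ R_i ≠ ∅ }. Then (R_i)_{i≥0} is a nondecreasing, eventually constant sequence of finite sets, and R = ∪_{i≥0} R_i is a finite set satisfying E ⊂ R and the property ⋆_V (i.e., −S(L) ⊂ R ⊂ V and ∪_{v ∈ V\R} π(Ψ(v)) = V \ R). Moreover max R = max (E ∪ −S(L)). -/

import Mathlib

open Polynomial Finset

noncomputable def PL {K : Type*} [Field K] (ℓ n : ℕ) (a : ℕ → Polynomial K) : Finset (ℚ × ℚ) :=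
  (Finset.range (n + 1)).biUnion fun i =>
    (a i).support.image fun j : ℕ => ((ℓ : ℚ) ^ i, (j : ℚ))

noncomputable def PsiSet {K : Type*} [Field K] (ℓ n : ℕ) (a : ℕ → Polynomial K) (v : ℚ) :
    Finset ℚ :=
  (PL ℓ n a).image fun p => v * p.1 + p.2

noncomputable def psi {K : Type*} [Field K] (ℓ n : ℕ) (a : ℕ → Polynomial K) (v : ℚ) : ℚ :=
  WithTop.untopD 0 ((PsiSet ℓ n a v).min)

noncomputable def piF {K : Type*} [Field K] (ℓ n : ℕ) (a : ℕ → Polynomial K) (q : ℚ) : ℚ :=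
  WithBot.unbotD 0 (((PL ℓ n a).image fun p => (q - p.2) / p.1).max)

def slopeSet {K : Type*} [Field K] (ℓ n : ℕ) (a : ℕ → Polynomial K) : Set ℚ :=
  {μ | ∃ b : ℚ,
    (∃ p ∈ PL ℓ n a, ∃ q ∈ PL ℓ n a, p ≠ q ∧ p.2 - μ * p.1 = b ∧ q.2 - μ * q.1 = b) ∧
    ∀ p ∈ PL ℓ n a, b ≤ p.2 - μ * p.1}

noncomputable def scaleEmb (ℓ : ℕ) (hℓ : 2 ≤ ℓ) (i : ℕ) : ℚ ↪o ℚ :=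
  (OrderIso.mulLeft₀ ((ℓ : ℚ) ^ i)
    (pow_pos (by exact_mod_cast Nat.lt_of_lt_of_le Nat.zero_lt_two hℓ) i)).toOrderEmbedding

noncomputable def mahlerOp {K : Type*} [Field K] (ℓ : ℕ) (hℓ : 2 ≤ ℓ) (n : ℕ)
    (a : ℕ → Polynomial K) (f : HahnSeries ℚ K) : HahnSeries ℚ K :=
  ∑ i ∈ Finset.range (n + 1),
    (HahnSeries.ofPowerSeries ℚ K (a i : PowerSeries K)) *
      HahnSeries.embDomain (scaleEmb ℓ hℓ i) f


section Aux
variable {K : Type*} [Field K] {ℓ n : ℕ} {a : ℕ → Polynomial K}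

lemma PL_nonempty (h0 : a 0 ≠ 0) : (PL ℓ n a).Nonempty := by
  obtain ⟨j, hj⟩ := Polynomial.nonempty_support_iff.mpr h0
  exact ⟨((ℓ : ℚ) ^ 0, (j : ℚ)), Finset.mem_biUnion.mpr
    ⟨0, Finset.mem_range.mpr (Nat.succ_pos n), Finset.mem_image.mpr ⟨j, hj, rfl⟩⟩⟩

lemma PL_pos (hℓ : 2 ≤ ℓ) {p : ℚ × ℚ} (hp : p ∈ PL ℓ n a) : 0 < p.1 := by
  obtain ⟨i, -, hi⟩ := Finset.mem_biUnion.mp hp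
  obtain ⟨j, -, rfl⟩ := Finset.mem_image.mp hi
  exact pow_pos (by exact_mod_cast Nat.lt_of_lt_of_le Nat.zero_lt_two hℓ) i

lemma piF_spec (h0 : a 0 ≠ 0) (q : ℚ) :
    (∀ p ∈ PL ℓ n a, (q - p.2) / p.1 ≤ piF ℓ n a q) ∧
      ∃ p' ∈ PL ℓ n a, (q - p'.2) / p'.1 = piF ℓ n a q := by
  have hne : ((PL ℓ n a).image fun p => (q - p.2) / p.1).Nonempty :=
    (PL_nonempty (ℓ := ℓ) (n := n) h0).image _
  have hmax : ((PL ℓ n a).image fun p => (q - p.2) / p.1).max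
      = ((((PL ℓ n a).image fun p => (q - p.2) / p.1)).max' hne : ℚ) :=
    (Finset.coe_max' hne).symm
  have hpi : piF ℓ n a q = (((PL ℓ n a).image fun p => (q - p.2) / p.1)).max' hne := by
    rw [piF, hmax]; rfl
  constructor
  · intro p hp
    rw [hpi]
    exact Finset.le_max' _ _ (Finset.mem_image_of_mem (fun p : ℚ × ℚ => (q - p.2) / p.1) hp)
  · obtain ⟨p', hp', h⟩ := Finset.mem_image.mp (Finset.max'_mem _ hne)
    exact ⟨p', hp', by rw [hpi, h]⟩

lemma mem_child_self (hℓ : 2 ≤ ℓ) (h0 : a 0 ≠ 0) (v : ℚ) :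
    v ∈ (PsiSet ℓ n a v).image (piF ℓ n a) := by
  obtain ⟨p₀, hp₀, hmin⟩ :=
    Finset.exists_min_image (PL ℓ n a) (fun p : ℚ × ℚ => p.2 + v * p.1) (PL_nonempty (ℓ := ℓ) (n := n) h0)
  refine Finset.mem_image.mpr ⟨v * p₀.1 + p₀.2, Finset.mem_image.mpr ⟨p₀, hp₀, rfl⟩, ?_⟩
  obtain ⟨hub, p', hp', heq⟩ := piF_spec h0 (v * p₀.1 + p₀.2)
  refine le_antisymm ?_ ?_
  · rw [← heq, div_le_iff₀ (PL_pos hℓ hp')]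
    have := hmin p' hp'
    linarith
  · have h1 : p₀.1 ≠ 0 := ne_of_gt (PL_pos hℓ hp₀)
    have h3 : (v * p₀.1 + p₀.2 - p₀.2) / p₀.1 = v := by field_simp; ring
    have := hub p₀ hp₀
    rwa [h3] at this

lemma child_ge (hℓ : 2 ≤ ℓ) (h0 : a 0 ≠ 0) {v w : ℚ}
    (hw : w ∈ (PsiSet ℓ n a v).image (piF ℓ n a)) : v ≤ w := by
  obtain ⟨q, hq, rfl⟩ := Finset.mem_image.mp hw
  obtain ⟨p, hp, rfl⟩ := Finset.mem_image.mp hq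
  have := (piF_spec h0 (v * p.1 + p.2)).1 p hp
  have h1 : p.1 ≠ 0 := ne_of_gt (PL_pos hℓ hp)
  have h2 : (v * p.1 + p.2 - p.2) / p.1 = v := by field_simp; ring
  rwa [h2] at this

lemma parent_mem (hℓ : 2 ≤ ℓ) (h0 : a 0 ≠ 0) {v w : ℚ}
    (hw : w ∈ (PsiSet ℓ n a v).image (piF ℓ n a)) :
    v ∈ (PL ℓ n a ×ˢ PL ℓ n a).image
      fun r : (ℚ × ℚ) × ℚ × ℚ => (w * r.2.1 + r.2.2 - r.1.2) / r.1.1 := by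
  obtain ⟨q, hq, rfl⟩ := Finset.mem_image.mp hw
  obtain ⟨p, hp, rfl⟩ := Finset.mem_image.mp hq
  obtain ⟨p', hp', heq⟩ := (piF_spec h0 (v * p.1 + p.2)).2
  refine Finset.mem_image.mpr ⟨(p, p'), Finset.mem_product.mpr ⟨hp, hp'⟩, ?_⟩
  have h1 : p.1 ≠ 0 := ne_of_gt (PL_pos hℓ hp)
  have h1' : p'.1 ≠ 0 := ne_of_gt (PL_pos hℓ hp')
  have h2 : piF ℓ n a (v * p.1 + p.2) * p'.1 = v * p.1 + p.2 - p'.2 := by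
    rw [← heq]; field_simp
  field_simp [h2]; linarith

lemma slopeSet_finite : (slopeSet ℓ n a).Finite := by
  apply Set.Finite.subset (Finset.finite_toSet ((PL ℓ n a ×ˢ PL ℓ n a).image
    fun r : (ℚ × ℚ) × ℚ × ℚ => (r.1.2 - r.2.2) / (r.1.1 - r.2.1)))
  rintro μ ⟨b, ⟨p, hp, q, hq, hne, hpb, hqb⟩, -⟩
  have h1 : p.1 ≠ q.1 := by
    intro h
    apply hne
    have h2 : p.2 = q.2 := by rw [h] at hpb; linarith [hpb.trans hqb.symm]
    exact Prod.ext h h2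
  refine Finset.mem_coe.mpr (Finset.mem_image.mpr ⟨(p, q),
    Finset.mem_product.mpr ⟨hp, hq⟩, ?_⟩)
  rw [div_eq_iff (sub_ne_zero.mpr h1)]
  have := hpb.trans hqb.symm
  linarith

end Aux

theorem stmt19 {K : Type*} [Field K] (ℓ n : ℕ) (hℓ : 2 ≤ ℓ) (a : ℕ → Polynomial K)
    (h0 : a 0 ≠ 0) (hn : a n ≠ 0) (V : Set ℚ)
    (hsolV : ∀ f : HahnSeries ℚ K, mahlerOp ℓ hℓ n a f = 0 → f.support ⊆ V)
    (hwf : V.IsWF)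
    (hslV : Neg.neg '' slopeSet ℓ n a ⊆ V)
    (hstab : (⋃ v ∈ V, ((PsiSet ℓ n a v).image (piF ℓ n a) : Set ℚ)) = V)
    (E : Set ℚ) (hEfin : E.Finite) (hEV : E ⊆ V)
    (R : ℕ → Set ℚ)
    (hR0 : R 0 = E ∪ Neg.neg '' slopeSet ℓ n a)
    (hRs : ∀ i, R (i + 1) =
      {v ∈ V | (((PsiSet ℓ n a v).image (piF ℓ n a) : Set ℚ) ∩ R i).Nonempty}) :
    Monotone R ∧ (∀ i, (R i).Finite) ∧ (∃ N, ∀ i, N ≤ i → R i = R N) ∧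
    (⋃ i, R i).Finite ∧ E ⊆ (⋃ i, R i) ∧
    Neg.neg '' slopeSet ℓ n a ⊆ (⋃ i, R i) ∧ (⋃ i, R i) ⊆ V ∧
    (⋃ v ∈ V \ (⋃ i, R i), ((PsiSet ℓ n a v).image (piF ℓ n a) : Set ℚ)) = V \ (⋃ i, R i) ∧
    ∀ m : ℚ, IsGreatest (E ∪ Neg.neg '' slopeSet ℓ n a) m → IsGreatest (⋃ i, R i) m := by
  classical
  set C : ℚ → Set ℚ := fun v => ((PsiSet ℓ n a v).image (piF ℓ n a) : Set ℚ) with hC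
  have hself : ∀ v : ℚ, v ∈ C v := fun v => Finset.mem_coe.mpr (mem_child_self hℓ h0 v)
  have hge : ∀ {v w : ℚ}, w ∈ C v → v ≤ w := fun hw => child_ge hℓ h0 (Finset.mem_coe.mp hw)
  have hCV : ∀ v ∈ V, C v ⊆ V := by
    intro v hv x hx
    rw [← hstab]
    exact Set.mem_iUnion₂.mpr ⟨v, hv, hx⟩
  have hR0' : R 0 ⊆ V := by rw [hR0]; exact Set.union_subset hEV hslV
  have hmono1 : ∀ i, R i ⊆ R (i + 1) := by
    intro i
    induction i with
    | zero => intro v hv; rw [hRs 0]; exact ⟨hR0' hv, v, hself v, hv⟩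
    | succ i ih =>
      intro v hv
      rw [hRs i] at hv
      rw [hRs (i + 1)]
      obtain ⟨hvV, u, huC, huR⟩ := hv
      exact ⟨hvV, u, huC, ih huR⟩
  have hmono : Monotone R := monotone_nat_of_le_succ hmono1
  set S : Set ℚ := ⋃ i, R i with hS
  have hRS : ∀ i, R i ⊆ S := fun i => Set.subset_iUnion R i
  set rel : ℚ → ℚ → Prop := fun v w => v ∈ V ∧ w ∈ C v with hrel
  have hdrop : ∀ v w' : ℚ, Relation.ReflTransGen rel v w' →
      v = w' ∨ ∃ p, p ∈ V ∧ p < w' ∧ w' ∈ C p ∧ Relation.ReflTransGen rel v p := by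
    intro v w' h
    induction h with
    | refl => exact Or.inl rfl
    | tail h1 h2 ih =>
      rename_i b c
      rcases lt_or_eq_of_le (hge h2.2) with hlt | heq
      · exact Or.inr ⟨b, h2.1, hlt, h2.2, h1⟩
      · exact heq ▸ ih
  have hAncFin : ∀ w ∈ V, Set.Finite {v : ℚ | Relation.ReflTransGen rel v w} := by
    intro w hw
    refine Set.WellFoundedOn.induction (P := fun w => Set.Finite {v : ℚ | Relation.ReflTransGen rel v w}) hwf hw ?_
    intro y hy IH
    have hsub : {v : ℚ | Relation.ReflTransGen rel v y} ⊆
        {y} ∪ ⋃ p ∈ {p : ℚ | p ∈ V ∧ p < y ∧ y ∈ C p},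
          {v : ℚ | Relation.ReflTransGen rel v p} := by
      intro v hv
      rcases hdrop v y hv with rfl | ⟨p, hpV, hplt, hyC, hchain⟩
      · exact Or.inl rfl
      · exact Or.inr (Set.mem_biUnion ⟨hpV, hplt, hyC⟩ hchain)
    refine Set.Finite.subset ?_ hsub
    refine (Set.finite_singleton y).union (Set.Finite.biUnion ?_ fun p hp => IH p hp.1 hp.2.1)
    refine Set.Finite.subset (Finset.finite_toSet ((PL ℓ n a ×ˢ PL ℓ n a).image
      fun r : (ℚ × ℚ) × ℚ × ℚ => (y * r.2.1 + r.2.2 - r.1.2) / r.1.1)) ?_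
    intro p hp
    exact Finset.mem_coe.mpr (parent_mem hℓ h0 (Finset.mem_coe.mp hp.2.2))
  have hchainR : ∀ i, ∀ v ∈ R i, ∃ w ∈ R 0, Relation.ReflTransGen rel v w := by
    intro i
    induction i with
    | zero => exact fun v hv => ⟨v, hv, Relation.ReflTransGen.refl⟩
    | succ i ih =>
      intro v hv
      rw [hRs i] at hv
      obtain ⟨hvV, u, huC, huR⟩ := hv
      obtain ⟨w, hw, hch⟩ := ih u huR
      exact ⟨w, hw, Relation.ReflTransGen.head ⟨hvV, huC⟩ hch⟩
  have hR0fin : (R 0).Finite := by rw [hR0]; exact hEfin.union (slopeSet_finite.image _)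
  have hSfin : S.Finite := by
    refine Set.Finite.subset (Set.Finite.biUnion hR0fin fun w hw => hAncFin w (hR0' hw)) ?_
    intro v hv
    obtain ⟨i, hvi⟩ := Set.mem_iUnion.mp hv
    obtain ⟨w, hw, hch⟩ := hchainR i v hvi
    exact Set.mem_biUnion hw hch
  have hfin : ∀ i, (R i).Finite := fun i => hSfin.subset (hRS i)
  obtain ⟨s, hs⟩ : ∃ s : Finset ℚ, ↑s = S := ⟨hSfin.toFinset, hSfin.coe_toFinset⟩
  have hmemR : ∀ x : {y // y ∈ s}, ∃ i, (x : ℚ) ∈ R i := by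
    intro x
    have hx : (x : ℚ) ∈ S := by rw [← hs]; exact Finset.mem_coe.mpr x.2
    exact Set.mem_iUnion.mp hx
  choose f hf using hmemR
  set N : ℕ := s.attach.sup f with hN
  have hSN : S ⊆ R N := by
    intro x hx
    have hxs : x ∈ s := by rw [← Finset.mem_coe, hs]; exact hx
    exact hmono (Finset.le_sup (Finset.mem_attach s ⟨x, hxs⟩)) (hf ⟨x, hxs⟩)
  have hub : ∀ i, ∀ x ∈ R i, ∀ m : ℚ, (∀ y ∈ R 0, y ≤ m) → x ≤ m := by
    intro i
    induction i with
    | zero => exact fun x hx m hm => hm x hx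
    | succ i ih =>
      intro x hx m hm
      rw [hRs i] at hx
      obtain ⟨-, u, huC, huR⟩ := hx
      exact le_trans (hge huC) (ih u huR m hm)
  refine ⟨hmono, hfin, ⟨N, fun i hi => Set.Subset.antisymm
    (fun x hx => hSN (hRS i hx)) (hmono hi)⟩, hSfin, ?_, ?_, ?_, ?_, ?_⟩
  · exact fun x hx => hRS 0 (hR0 ▸ Set.mem_union_left _ hx)
  · exact fun x hx => hRS 0 (hR0 ▸ Set.mem_union_right _ hx)
  · intro x hx
    obtain ⟨i, hxi⟩ := Set.mem_iUnion.mp hx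
    cases i with
    | zero => exact hR0' hxi
    | succ i => rw [hRs i] at hxi; exact hxi.1
  · apply Set.Subset.antisymm
    · intro x hx
      obtain ⟨v, hv, hxC⟩ := Set.mem_iUnion₂.mp hx
      refine ⟨hCV v hv.1 hxC, ?_⟩
      intro hxS
      obtain ⟨i, hxi⟩ := Set.mem_iUnion.mp hxS
      exact hv.2 (hRS (i + 1) (by rw [hRs i]; exact ⟨hv.1, x, hxC, hxi⟩))
    · intro w hw
      exact Set.mem_iUnion₂.mpr ⟨w, hw, hself w⟩
  · intro m hm
    rw [← hR0] at hm
    refine ⟨hRS 0 hm.1, ?_⟩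
    intro x hx
    obtain ⟨i, hxi⟩ := Set.mem_iUnion.mp hx
    exact hub i x hxi m fun y hy => hm.2 hy
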